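/- Lower semicontinuity of the FNGW cost functional: given two network tuples g_X = (X, ψ_X, φ_X, ω_X, μ_X) and g_Y = (Y, ψ_Y, φ_Y, ω_Y, μ_Y), for any p, q ∈ [1, ∞) and (α, β) ∈ [0,1]², the functional μ ↦ E_{α,β,q,p}(g_X, g_Y, μ) is lower semicontinuous on Π(μ_X, μ_Y) with respect to the topology of weak convergence of probability measures on X × Y. -/

import Mathlib

open MeasureTheory

/-- The set of couplings of two probability measures: Borel probability measures on the
product whose marginals are the given measures. -/
def couplings {X Y : Type*} [MeasurableSpace X] [MeasurableSpace Y]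
    (μX : Measure X) (μY : Measure Y) : Set (Measure (X × Y)) :=
  {μ | IsProbabilityMeasure μ ∧ μ.map Prod.fst = μX ∧ μ.map Prod.snd = μY}

/-- The FNGW cost functional `E_{α,β,q,p}(g_X, g_Y, μ)`. -/
noncomputable def fngwCost {X Y Ψ Ω : Type*} [MeasurableSpace X] [MeasurableSpace Y]
    [MetricSpace Ψ] [MetricSpace Ω]
    (α β q p : ℝ)
    (ψX : X → Ψ) (φX : X × X → ℝ) (ωX : X × X → Ω)
    (ψY : Y → Ψ) (φY : Y × Y → ℝ) (ωY : Y × Y → Ω)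
    (μ : Measure (X × Y)) : ℝ :=
  (∫ w : (X × Y) × (X × Y),
      ((1 - α - β) * dist (ψX w.1.1) (ψY w.1.2) ^ q
        + α * dist (ωX (w.1.1, w.2.1)) (ωY (w.1.2, w.2.2)) ^ q
        + β * |φX (w.1.1, w.2.1) - φY (w.1.2, w.2.2)| ^ q) ^ p
      ∂(μ.prod μ)) ^ (1 / p)

/-- The Fused Network Gromov–Wasserstein distance: infimum of the cost over couplings. -/
noncomputable def FNGW {X Y Ψ Ω : Type*} [MeasurableSpace X] [MeasurableSpace Y]
    [MetricSpace Ψ] [MetricSpace Ω]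
    (α β q p : ℝ)
    (ψX : X → Ψ) (φX : X × X → ℝ) (ωX : X × X → Ω)
    (ψY : Y → Ψ) (φY : Y × Y → ℝ) (ωY : Y × Y → Ω)
    (μX : Measure X) (μY : Measure Y) : ℝ :=
  sInf ((fngwCost α β q p ψX φX ωX ψY φY ωY) '' couplings μX μY)

open MeasureTheory Filter Topology TopologicalSpace BoundedContinuousFunction Set
open scoped ENNReal NNReal

namespace FNGWAux


variable {S : Type*} [TopologicalSpace S]

/-- Tensor product of two bounded continuous functions. -/
noncomputable def tens (u v : S →ᵇ ℝ) : (S × S) →ᵇ ℝ :=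
  u.compContinuous ContinuousMap.fst * v.compContinuous ContinuousMap.snd

@[simp] lemma tens_apply (u v : S →ᵇ ℝ) (w : S × S) : tens u v w = u w.1 * v w.2 := rfl

lemma tens_mul (u v u' v' : S →ᵇ ℝ) : tens u v * tens u' v' = tens (u * u') (v * v') := by
  ext w
  simp [tens]
  ring

lemma bcf_prod_apply {ι : Type*} {α : Type*} [TopologicalSpace α] (s : Finset ι)
    (F : ι → α →ᵇ ℝ) (x : α) : (∏ i ∈ s, F i) x = ∏ i ∈ s, F i x := by
  classical
  induction s using Finset.cons_induction with
  | empty => simp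
  | cons a s ha ih => simp [Finset.cons_eq_insert, Finset.prod_insert ha, ih]

lemma prod_sub_prod_le {ι : Type*} (s : Finset ι) (a c : ι → ℝ)
    (hc0 : ∀ i ∈ s, 0 ≤ c i) (hca : ∀ i ∈ s, c i ≤ a i) (ha1 : ∀ i ∈ s, a i ≤ 1) :
    ∏ i ∈ s, a i - ∏ i ∈ s, c i ≤ ∑ i ∈ s, (a i - c i) := by
  classical
  induction s using Finset.cons_induction with
  | empty => simp
  | cons j s hj ih =>
    simp only [Finset.prod_cons, Finset.sum_cons]
    have hc0' : ∀ i ∈ s, 0 ≤ c i := fun i hi => hc0 i (Finset.mem_cons_of_mem hi)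
    have hca' : ∀ i ∈ s, c i ≤ a i := fun i hi => hca i (Finset.mem_cons_of_mem hi)
    have ha1' : ∀ i ∈ s, a i ≤ 1 := fun i hi => ha1 i (Finset.mem_cons_of_mem hi)
    have ih' := ih hc0' hca' ha1'
    have hPc0 : 0 ≤ ∏ i ∈ s, c i := Finset.prod_nonneg hc0'
    have hPc1 : ∏ i ∈ s, c i ≤ 1 :=
      Finset.prod_le_one hc0' (fun i hi => (hca' i hi).trans (ha1' i hi))
    have hPca : ∏ i ∈ s, c i ≤ ∏ i ∈ s, a i := Finset.prod_le_prod hc0' hca'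
    have hj0 : 0 ≤ c j := hc0 j (Finset.mem_cons_self _ _)
    have hja : c j ≤ a j := hca j (Finset.mem_cons_self _ _)
    have hj1 : a j ≤ 1 := ha1 j (Finset.mem_cons_self _ _)
    nlinarith [ih', hPc0, hPc1, hPca, hj0, hja, hj1]



variable {S : Type*} [TopologicalSpace S] [MeasurableSpace S] [OpensMeasurableSpace S]

lemma exists_bcf_approx_open [HasOuterApproxClosed S]
    (μ : Measure S) [IsProbabilityMeasure μ] {A : Set S} (hA : IsOpen A)
    {δ : ℝ} (hδ : 0 < δ) :
    ∃ f : S →ᵇ ℝ, (∀ x, 0 ≤ f x) ∧ (∀ x, f x ≤ 1) ∧ (∀ x, x ∉ A → f x = 0) ∧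
      (μ A).toReal - δ ≤ ∫ x, f x ∂μ ∧ ∫ x, f x ∂μ ≤ (μ A).toReal := by
  have hF : IsClosed Aᶜ := hA.isClosed_compl
  have htend := HasOuterApproxClosed.tendsto_lintegral_apprSeq hF μ
  have hlt : μ Aᶜ < μ Aᶜ + ENNReal.ofReal δ := by
    apply ENNReal.lt_add_right (measure_ne_top μ _)
    simp [ENNReal.ofReal_pos, hδ]
  obtain ⟨n, hn⟩ := (htend.eventually_lt_const hlt).exists
  set g : S →ᵇ NNReal := hF.apprSeq n with hg
  -- the real-valued version of g
  have gcont : Continuous fun x => (g x : ℝ) := NNReal.continuous_coe.comp g.continuous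
  have gbd : ∀ x, ‖(g x : ℝ)‖ ≤ 1 := by
    intro x
    rw [Real.norm_of_nonneg (g x).coe_nonneg]
    exact_mod_cast HasOuterApproxClosed.apprSeq_apply_le_one hF n x
  set gR : S →ᵇ ℝ := BoundedContinuousFunction.ofNormedAddCommGroup _ gcont 1 gbd with hgR
  have hgR_apply : ∀ x, gR x = (g x : ℝ) := fun x => rfl
  have gR_int : Integrable (fun x => (g x : ℝ)) μ := by
    have := gR.integrable μ
    simpa [hgR] using this
  have hlin : ∫⁻ x, (g x : ℝ≥0∞) ∂μ = ENNReal.ofReal (∫ x, (g x : ℝ) ∂μ) :=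
    lintegral_coe_eq_integral _ gR_int
  have hIg_nonneg : 0 ≤ ∫ x, (g x : ℝ) ∂μ :=
    integral_nonneg fun x => (g x).coe_nonneg
  -- μ Aᶜ ≤ ∫ g
  have h1 : (μ Aᶜ).toReal ≤ ∫ x, (g x : ℝ) ∂μ := by
    have := HasOuterApproxClosed.measure_le_lintegral hF μ n
    rw [hlin] at this
    exact ENNReal.toReal_le_of_le_ofReal hIg_nonneg this
  -- ∫ g < μ Aᶜ + δ
  have h2 : ∫ x, (g x : ℝ) ∂μ ≤ (μ Aᶜ).toReal + δ := by
    rw [hlin] at hn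
    have : ENNReal.ofReal (∫ x, (g x : ℝ) ∂μ) ≤ ENNReal.ofReal ((μ Aᶜ).toReal + δ) := by
      refine le_of_lt (lt_of_lt_of_le hn ?_)
      rw [ENNReal.ofReal_add ENNReal.toReal_nonneg hδ.le, ENNReal.ofReal_toReal (measure_ne_top μ _)]
    rwa [ENNReal.ofReal_le_ofReal_iff (by positivity), ] at this
  -- define f = 1 - gR
  refine ⟨(1 : S →ᵇ ℝ) - gR, ?_, ?_, ?_, ?_, ?_⟩
  · intro x
    simp only [coe_sub, coe_one, Pi.sub_apply, Pi.one_apply, hgR_apply]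
    have : (g x : ℝ) ≤ 1 := by exact_mod_cast HasOuterApproxClosed.apprSeq_apply_le_one hF n x
    linarith
  · intro x
    simp only [coe_sub, coe_one, Pi.sub_apply, Pi.one_apply, hgR_apply]
    have : (0:ℝ) ≤ (g x : ℝ) := (g x).coe_nonneg
    linarith
  · intro x hx
    simp only [coe_sub, coe_one, Pi.sub_apply, Pi.one_apply, hgR_apply]
    have : g x = 1 := HasOuterApproxClosed.apprSeq_apply_eq_one hF n (by simpa using hx)
    rw [this]; norm_num
  all_goals {
    have hint : ∫ x, ((1 : S →ᵇ ℝ) - gR) x ∂μ = 1 - ∫ x, (g x : ℝ) ∂μ := by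
      simp only [coe_sub, coe_one, Pi.sub_apply, Pi.one_apply]
      rw [integral_sub (integrable_const 1) (by simpa [hgR] using gR.integrable μ)]
      simp [hgR_apply, measure_univ]
    have hcompl : (μ Aᶜ).toReal = 1 - (μ A).toReal := by
      have := measure_compl hA.measurableSet (measure_ne_top μ A)
      rw [this, measure_univ]
      rw [ENNReal.toReal_sub_of_le (measure_mono (subset_univ A) |>.trans_eq (by simp [measure_univ]) |>.trans_eq rfl) (by simp)]
      simp
    rw [hint]
    first
      | linarith [h2, hcompl]
      | linarith [h1, hcompl]
  }



variable {S : Type*} [TopologicalSpace S]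

lemma open_eq_iUnion_rect [SecondCountableTopology S] {U : Set (S × S)} (hU : IsOpen U)
    (hne : U.Nonempty) :
    ∃ A B : ℕ → Set S, (∀ k, IsOpen (A k)) ∧ (∀ k, IsOpen (B k)) ∧
      U = ⋃ k, A k ×ˢ B k := by
  obtain ⟨b, b_count, -, b_basis⟩ := exists_countable_basis S
  set P : Set (Set S × Set S) := {st | st.1 ∈ b ∧ st.2 ∈ b ∧ st.1 ×ˢ st.2 ⊆ U} with hP
  have P_count : P.Countable := by
    apply (b_count.prod b_count).mono
    rintro ⟨s, t⟩ ⟨hs, ht, -⟩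
    exact ⟨hs, ht⟩
  have hbasis := b_basis.prod b_basis
  have P_ne : P.Nonempty := by
    obtain ⟨w, hw⟩ := hne
    obtain ⟨v, hv, hwv, hvU⟩ := hbasis.exists_subset_of_mem_open hw hU
    obtain ⟨s, hs, t, ht, rfl⟩ := hv
    exact ⟨(s, t), hs, ht, hvU⟩
  obtain ⟨e, he⟩ := P_count.exists_eq_range P_ne
  refine ⟨fun k => (e k).1, fun k => (e k).2, ?_, ?_, ?_⟩
  · intro k
    have : e k ∈ P := by rw [he]; exact mem_range_self k
    exact b_basis.isOpen this.1
  · intro k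
    have : e k ∈ P := by rw [he]; exact mem_range_self k
    exact b_basis.isOpen this.2.1
  · apply Subset.antisymm
    · intro w hw
      obtain ⟨v, hv, hwv, hvU⟩ := hbasis.exists_subset_of_mem_open hw hU
      obtain ⟨s, hs, t, ht, rfl⟩ := hv
      have : (s, t) ∈ P := ⟨hs, ht, hvU⟩
      rw [he] at this
      obtain ⟨k, hk⟩ := this
      refine mem_iUnion.mpr ⟨k, ?_⟩
      simp only [hk]
      exact hwv
    · refine iUnion_subset fun k => ?_
      have : e k ∈ P := by rw [he]; exact mem_range_self k
      exact this.2.2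



variable {S : Type*} [TopologicalSpace S] [MeasurableSpace S] [OpensMeasurableSpace S]
  [SecondCountableTopology S]

lemma tendsto_integral_tensor_prod
    {μs : ℕ → ProbabilityMeasure S} {μ : ProbabilityMeasure S}
    (h : Tendsto μs atTop (𝓝 μ)) (f g : ℕ → S →ᵇ ℝ) (N : ℕ) :
    ∀ u v : S →ᵇ ℝ,
      Tendsto
        (fun n => ∫ w, (tens u v * ∏ k ∈ Finset.range N, (1 - tens (f k) (g k))) w
          ∂((μs n : Measure S).prod (μs n))) atTop
        (𝓝 (∫ w, (tens u v * ∏ k ∈ Finset.range N, (1 - tens (f k) (g k))) w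
          ∂((μ : Measure S).prod (μ : Measure S)))) := by
  induction N with
  | zero =>
    intro u v
    simp only [Finset.range_zero, Finset.prod_empty, mul_one]
    have key : ∀ ν : ProbabilityMeasure S,
        ∫ w, tens u v w ∂((ν : Measure S).prod (ν : Measure S))
          = (∫ x, u x ∂(ν : Measure S)) * ∫ x, v x ∂(ν : Measure S) := by
      intro ν
      simpa using integral_prod_mul (μ := (ν : Measure S)) (ν := (ν : Measure S))
        (fun x => u x) (fun y => v y)
    simp only [key]
    exact ((ProbabilityMeasure.tendsto_iff_forall_integral_tendsto.mp h u).mul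
      (ProbabilityMeasure.tendsto_iff_forall_integral_tendsto.mp h v))
  | succ N ih =>
    intro u v
    have expand : (tens u v * ∏ k ∈ Finset.range (N + 1), (1 - tens (f k) (g k)))
        = tens u v * ∏ k ∈ Finset.range N, (1 - tens (f k) (g k))
          - tens (u * f N) (v * g N) * ∏ k ∈ Finset.range N, (1 - tens (f k) (g k)) := by
      rw [Finset.prod_range_succ]
      ext w
      simp only [coe_mul, coe_sub, coe_one, Pi.mul_apply, Pi.sub_apply, Pi.one_apply, tens_apply]
      ring
    simp only [expand, coe_sub, Pi.sub_apply]
    have hInt : ∀ (ν : ProbabilityMeasure S) (u' v' : S →ᵇ ℝ),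
        Integrable (fun w => (tens u' v' * ∏ k ∈ Finset.range N, (1 - tens (f k) (g k))) w)
          ((ν : Measure S).prod (ν : Measure S)) :=
      fun ν u' v' => BoundedContinuousFunction.integrable _ _
    have hsub : ∀ ν : ProbabilityMeasure S,
        ∫ w, ((tens u v * ∏ k ∈ Finset.range N, (1 - tens (f k) (g k))) w
            - (tens (u * f N) (v * g N) * ∏ k ∈ Finset.range N, (1 - tens (f k) (g k))) w)
          ∂((ν : Measure S).prod (ν : Measure S))
        = ∫ w, (tens u v * ∏ k ∈ Finset.range N, (1 - tens (f k) (g k))) w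
            ∂((ν : Measure S).prod (ν : Measure S))
          - ∫ w, (tens (u * f N) (v * g N) * ∏ k ∈ Finset.range N, (1 - tens (f k) (g k))) w
            ∂((ν : Measure S).prod (ν : Measure S)) :=
      fun ν => integral_sub (hInt ν u v) (hInt ν (u * f N) (v * g N))
    simp only [hsub]
    exact (ih u v).sub (ih (u * f N) (v * g N))


section ProdConv

variable {S : Type*} [TopologicalSpace S] [PolishSpace S] [MeasurableSpace S] [BorelSpace S]

lemma tendsto_prod_self {μs : ℕ → ProbabilityMeasure S} {μ : ProbabilityMeasure S}
    (h : Tendsto μs atTop (𝓝 μ)) :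
    Tendsto (fun n => (μs n).prod (μs n)) atTop (𝓝 (μ.prod μ)) := by
  apply tendsto_of_forall_isOpen_le_liminf
  intro U hU
  rcases eq_empty_or_nonempty U with rfl | hne
  · have h0 : ((μ.prod μ) (∅ : Set (S × S)) : ℝ≥0∞) = 0 := by
      rw [ProbabilityMeasure.ennreal_coeFn_eq_coeFn_toMeasure]; simp
    have h0' : (μ.prod μ) (∅ : Set (S × S)) = 0 := by exact_mod_cast h0
    rw [h0']
    exact zero_le
  refine le_of_forall_lt_imp_le_of_dense fun r hr => ?_
  have hrE : (r : ℝ≥0∞) < ((μ.prod μ : ProbabilityMeasure (S × S)) : Measure (S × S)) U := by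
    have := ENNReal.coe_lt_coe.mpr hr
    rwa [ProbabilityMeasure.ennreal_coeFn_eq_coeFn_toMeasure] at this
  obtain ⟨A, B, hAop, hBop, hUeq⟩ := open_eq_iUnion_rect hU hne
  set ρ : Measure (S × S) := (μ : Measure S).prod (μ : Measure S) with hρ
  have hρ_eq : ((μ.prod μ : ProbabilityMeasure (S × S)) : Measure (S × S)) = ρ := rfl
  set R : ℕ → Set (S × S) := fun k => A k ×ˢ B k with hRdef
  have hRopen : ∀ k, IsOpen (R k) := fun k => (hAop k).prod (hBop k)
  have hRU : ∀ k, R k ⊆ U := by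
    intro k
    rw [hUeq]
    exact subset_iUnion (fun k => A k ×ˢ B k) k
  set V : ℕ → Set (S × S) := fun N => ⋃ k ∈ Finset.range N, R k with hVdef
  have hVopen : ∀ N, IsOpen (V N) := fun N => isOpen_biUnion fun k _ => hRopen k
  have hVU : ∀ N, V N ⊆ U := fun N => iUnion₂_subset fun k _ => hRU k
  have hVmono : Monotone V := by
    intro M N hMN
    exact biUnion_subset_biUnion_left (Finset.range_subset_range.mpr hMN)
  have hVunion : ⋃ N, V N = U := by
    apply Subset.antisymm
    · exact iUnion_subset hVU
    · rw [hUeq]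
      refine iUnion_subset fun k => ?_
      intro w hw
      exact mem_iUnion.mpr ⟨k + 1, mem_biUnion (Finset.self_mem_range_succ k) hw⟩
  have htendV := tendsto_measure_iUnion_atTop (μ := ρ) hVmono
  rw [hVunion] at htendV
  rw [hρ_eq] at hrE
  obtain ⟨N, hN⟩ := (htendV.eventually_const_lt hrE).exists
  set m : ℝ := (ρ (V N)).toReal with hm
  have hrm : (r : ℝ) < m := by
    have := ENNReal.toReal_lt_toReal ENNReal.coe_ne_top (measure_ne_top ρ (V N)) |>.mpr hN
    simpa using this
  set δ : ℝ := (m - r) / (2 * N + 1) with hδdef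
  have hδ : 0 < δ := div_pos (by linarith) (by positivity)
  choose f hf0 hf1 hfz hflo hfhi using fun k =>
    exists_bcf_approx_open (μ : Measure S) (hAop k) hδ
  choose g hg0 hg1 hgz hglo hghi using fun k =>
    exists_bcf_approx_open (μ : Measure S) (hBop k) hδ
  set P : (S × S) →ᵇ ℝ := ∏ k ∈ Finset.range N, (1 - tens (f k) (g k)) with hPdef
  set H : (S × S) →ᵇ ℝ := 1 - P with hHdef
  -- pointwise evaluations
  have hPw : ∀ w : S × S, P w = ∏ k ∈ Finset.range N, (1 - f k w.1 * g k w.2) := by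
    intro w
    rw [hPdef, bcf_prod_apply]
    refine Finset.prod_congr rfl fun k _ => ?_
    simp
  have hfg0 : ∀ (k) (w : S × S), 0 ≤ f k w.1 * g k w.2 :=
    fun k w => mul_nonneg (hf0 k w.1) (hg0 k w.2)
  have hfg1 : ∀ (k) (w : S × S), f k w.1 * g k w.2 ≤ 1 :=
    fun k w => mul_le_one₀ (hf1 k w.1) (hg0 k w.2) (hg1 k w.2)
  have hfgz : ∀ (k) (w : S × S), w ∉ R k → f k w.1 * g k w.2 = 0 := by
    intro k w hw
    rw [hRdef] at hw
    rcases not_and_or.mp (by simpa [Set.mem_prod] using hw) with h1 | h2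
    · rw [hfz k w.1 h1, zero_mul]
    · rw [hgz k w.2 h2, mul_zero]
  have hfg_le_ind : ∀ (k) (w : S × S), f k w.1 * g k w.2 ≤ (R k).indicator (fun _ => (1:ℝ)) w := by
    intro k w
    by_cases hw : w ∈ R k
    · simpa [indicator_of_mem hw] using hfg1 k w
    · simp [indicator_of_notMem hw, hfgz k w hw]
  have hP0 : ∀ w, 0 ≤ P w := by
    intro w
    rw [hPw]
    exact Finset.prod_nonneg fun k _ => by linarith [hfg1 k w]
  have hP1 : ∀ w, P w ≤ 1 := by
    intro w
    rw [hPw]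
    exact Finset.prod_le_one (fun k _ => by linarith [hfg1 k w])
      (fun k _ => by linarith [hfg0 k w])
  have hPone : ∀ w, w ∉ V N → P w = 1 := by
    intro w hw
    rw [hPw]
    apply Finset.prod_eq_one
    intro k hk
    have : w ∉ R k := fun hwk => hw (mem_biUnion hk hwk)
    rw [hfgz k w this]
    ring
  have hHw : ∀ w : S × S, H w = 1 - P w := by
    intro w; rw [hHdef]; simp
  -- upper bound for the integral of H against any probability measure
  have claim1 : ∀ ρ' : Measure (S × S), IsProbabilityMeasure ρ' →
      ∫ w, H w ∂ρ' ≤ (ρ' U).toReal := by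
    intro ρ' hρ'
    have hmono : ∀ w, H w ≤ U.indicator (fun _ => (1 : ℝ)) w := by
      intro w
      by_cases hw : w ∈ U
      · rw [indicator_of_mem hw, hHw]
        linarith [hP0 w]
      · have : w ∉ V N := fun hwv => hw (hVU N hwv)
        rw [indicator_of_notMem hw, hHw, hPone w this]
        norm_num
    calc ∫ w, H w ∂ρ' ≤ ∫ w, U.indicator (fun _ => (1 : ℝ)) w ∂ρ' := by
          exact integral_mono (H.integrable ρ') ((integrable_const (1:ℝ)).indicator hU.measurableSet) hmono
      _ = (ρ' U).toReal := by
          rw [integral_indicator_const (1 : ℝ) hU.measurableSet]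
          simp [measureReal_def]
  -- lower bound for the integral of H against ρ
  have claim2 : (r : ℝ) < ∫ w, H w ∂ρ := by
    have hpoint : ∀ w : S × S, (V N).indicator (fun _ => (1:ℝ)) w
        ≤ H w + ∑ k ∈ Finset.range N, ((R k).indicator (fun _ => (1:ℝ)) w - f k w.1 * g k w.2) := by
      intro w
      by_cases hw : w ∈ V N
      · rw [indicator_of_mem hw]
        have key := prod_sub_prod_le (Finset.range N)
          (fun k => 1 - f k w.1 * g k w.2)
          (fun k => 1 - (R k).indicator (fun _ => (1:ℝ)) w)
          (fun k _ => by
            show (0:ℝ) ≤ 1 - (R k).indicator (fun _ => (1:ℝ)) w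
            by_cases hk : w ∈ R k <;> simp [indicator_of_mem, indicator_of_notMem, hk])
          (fun k _ => by
            show (1:ℝ) - (R k).indicator (fun _ => (1:ℝ)) w ≤ 1 - f k w.1 * g k w.2
            linarith [hfg_le_ind k w])
          (fun k _ => by
            show (1:ℝ) - f k w.1 * g k w.2 ≤ 1
            linarith [hfg0 k w])
        obtain ⟨j, hj, hwj⟩ := mem_iUnion₂.mp hw
        have hprodc : ∏ k ∈ Finset.range N, (1 - (R k).indicator (fun _ => (1:ℝ)) w) = 0 := by
          apply Finset.prod_eq_zero hj
          rw [indicator_of_mem hwj]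
          ring
        rw [hprodc] at key
        have hsum : ∑ k ∈ Finset.range N, ((1 - f k w.1 * g k w.2) - (1 - (R k).indicator (fun _ => (1:ℝ)) w))
            = ∑ k ∈ Finset.range N, ((R k).indicator (fun _ => (1:ℝ)) w - f k w.1 * g k w.2) := by
          refine Finset.sum_congr rfl fun k _ => by ring
        rw [hsum] at key
        have := hPw w
        rw [hHw]
        linarith [key, hPw w]
      · rw [indicator_of_notMem hw, hHw, hPone w hw]
        have : ∀ k ∈ Finset.range N, (0:ℝ) ≤ (R k).indicator (fun _ => (1:ℝ)) w - f k w.1 * g k w.2 := by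
          intro k hk
          have hwk : w ∉ R k := fun hwk => hw (mem_biUnion hk hwk)
          rw [indicator_of_notMem hwk, hfgz k w hwk]
          norm_num
        have := Finset.sum_nonneg this
        linarith
    -- integrate the pointwise bound
    have hint_ind : ∀ (T : Set (S × S)), IsOpen T →
        Integrable (fun w => T.indicator (fun _ => (1:ℝ)) w) ρ :=
      fun T hT => (integrable_const (1:ℝ)).indicator hT.measurableSet
    have hterm_int : ∀ k, Integrable
        (fun w : S × S => (R k).indicator (fun _ => (1:ℝ)) w - f k w.1 * g k w.2) ρ := by
      intro k
      exact (hint_ind (R k) (hRopen k)).sub (by exact ((tens (f k) (g k)).integrable ρ))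
    have hIle : ∫ w, (V N).indicator (fun _ => (1:ℝ)) w ∂ρ
        ≤ ∫ w, (H w + ∑ k ∈ Finset.range N, ((R k).indicator (fun _ => (1:ℝ)) w - f k w.1 * g k w.2)) ∂ρ := by
      refine integral_mono (hint_ind (V N) (hVopen N)) ?_ hpoint
      exact (H.integrable ρ).add (integrable_finset_sum _ fun k _ => hterm_int k)
    have hLHS : ∫ w, (V N).indicator (fun _ => (1:ℝ)) w ∂ρ = m := by
      rw [integral_indicator_const (1 : ℝ) (hVopen N).measurableSet]
      simp [hm, measureReal_def]
    have hRHS : ∫ w, (H w + ∑ k ∈ Finset.range N, ((R k).indicator (fun _ => (1:ℝ)) w - f k w.1 * g k w.2)) ∂ρ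
        = ∫ w, H w ∂ρ + ∑ k ∈ Finset.range N,
            (((μ : Measure S) (A k)).toReal * ((μ : Measure S) (B k)).toReal
              - (∫ x, f k x ∂(μ : Measure S)) * (∫ x, g k x ∂(μ : Measure S))) := by
      rw [integral_add (H.integrable ρ) (integrable_finset_sum _ fun k _ => hterm_int k),
        integral_finset_sum _ fun k _ => hterm_int k]
      congr 1
      refine Finset.sum_congr rfl fun k _ => ?_
      rw [integral_sub (hint_ind (R k) (hRopen k)) (by exact ((tens (f k) (g k)).integrable ρ))]
      congr 1
      · rw [integral_indicator_const (1 : ℝ) (hRopen k).measurableSet]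
        rw [hρ, hRdef, measureReal_def]
        rw [Measure.prod_prod, ENNReal.toReal_mul]
        simp
      · rw [hρ]
        exact integral_prod_mul (fun x => f k x) (fun y => g k y)
    have hterm_le : ∀ k ∈ Finset.range N,
        ((μ : Measure S) (A k)).toReal * ((μ : Measure S) (B k)).toReal
          - (∫ x, f k x ∂(μ : Measure S)) * (∫ x, g k x ∂(μ : Measure S)) ≤ 2 * δ := by
      intro k _
      set a1 := ((μ : Measure S) (A k)).toReal
      set b1 := ((μ : Measure S) (B k)).toReal
      set If := ∫ x, f k x ∂(μ : Measure S)
      set Ig := ∫ x, g k x ∂(μ : Measure S)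
      have ha1 : a1 ≤ 1 := by
        apply ENNReal.toReal_le_of_le_ofReal zero_le_one
        simpa using prob_le_one (μ := (μ : Measure S)) (s := A k)
      have hb1 : b1 ≤ 1 := by
        apply ENNReal.toReal_le_of_le_ofReal zero_le_one
        simpa using prob_le_one (μ := (μ : Measure S)) (s := B k)
      have hIf0 : 0 ≤ If := integral_nonneg fun x => hf0 k x
      have hIg0 : 0 ≤ Ig := integral_nonneg fun x => hg0 k x
      nlinarith [hflo k, hfhi k, hglo k, hghi k, hδ]
    have hsum_le : ∑ k ∈ Finset.range N,
        (((μ : Measure S) (A k)).toReal * ((μ : Measure S) (B k)).toReal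
          - (∫ x, f k x ∂(μ : Measure S)) * (∫ x, g k x ∂(μ : Measure S))) ≤ 2 * N * δ := by
      calc _ ≤ ∑ _k ∈ Finset.range N, 2 * δ := Finset.sum_le_sum hterm_le
        _ = 2 * N * δ := by
          rw [Finset.sum_const, Finset.card_range]
          push_cast
          ring
    have hkey : δ * (2 * N + 1) = m - r := by
      rw [hδdef]
      field_simp
    have : m ≤ ∫ w, H w ∂ρ + 2 * N * δ := by
      rw [hLHS, hRHS] at hIle
      linarith [hIle, hsum_le]
    linarith [this, hkey, hδ]
  -- convergence of the integrals of H
  have claim3 : Tendsto (fun n => ∫ w, H w ∂((μs n : Measure S).prod (μs n))) atTop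
      (𝓝 (∫ w, H w ∂ρ)) := by
    have htens1 : tens (1 : S →ᵇ ℝ) 1 = 1 := by
      ext w; simp
    have := tendsto_integral_tensor_prod h f g N 1 1
    rw [htens1] at this
    simp only [one_mul] at this
    have hHint : ∀ ρ' : Measure (S × S), IsProbabilityMeasure ρ' →
        ∫ w, H w ∂ρ' = 1 - ∫ w, P w ∂ρ' := by
      intro ρ' hρ'
      have : ∫ w, H w ∂ρ' = ∫ w, ((1:ℝ) - P w) ∂ρ' := by
        refine integral_congr_ae (Eventually.of_forall fun w => ?_)
        rw [hHw]
      rw [this, integral_sub (integrable_const 1) (P.integrable ρ')]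
      simp
    have hprob : ∀ n, IsProbabilityMeasure ((μs n : Measure S).prod ((μs n : Measure S))) :=
      fun n => by infer_instance
    have hprobρ : IsProbabilityMeasure ρ := by rw [hρ]; infer_instance
    simp only [fun n => hHint _ (hprob n), hHint ρ hprobρ]
    exact tendsto_const_nhds.sub (by exact this)
  -- conclude
  have hev : ∀ᶠ n in atTop, r ≤ (μs n).prod (μs n) U := by
    filter_upwards [claim3.eventually_const_lt claim2] with n hn
    have hle := claim1 ((μs n : Measure S).prod (μs n)) (by infer_instance)
    have hlt : (r : ℝ) < (((μs n : Measure S).prod (μs n)) U).toReal := lt_of_lt_of_le hn hle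
    have hcoe : ((((μs n).prod (μs n)) U : ℝ≥0) : ℝ)
        = (((μs n : Measure S).prod ((μs n : Measure S))) U).toReal := by
      have h2 := congrArg ENNReal.toReal
        (ProbabilityMeasure.ennreal_coeFn_eq_coeFn_toMeasure ((μs n).prod (μs n)) U)
      rw [ENNReal.coe_toReal] at h2
      exact h2
    have : (r : ℝ) ≤ ((((μs n).prod (μs n)) U : ℝ≥0) : ℝ) := by rw [hcoe]; exact hlt.le
    exact_mod_cast this
  refine le_liminf_of_le ?_ hev
  refine IsBoundedUnder.isCoboundedUnder_ge ?_
  exact ⟨1, eventually_map.mpr (Eventually.of_forall fun n =>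
    ProbabilityMeasure.apply_le_one _ _)⟩

end ProdConv

end FNGWAux


/-- **Lower semicontinuity of the FNGW cost functional** on the set of couplings,
with respect to the topology of weak convergence of probability measures. -/
theorem fngw_cost_lowerSemicontinuousOn
    {X Y Ψ Ω : Type*}
    [MeasurableSpace X] [TopologicalSpace X] [PolishSpace X] [BorelSpace X]
    [MeasurableSpace Y] [TopologicalSpace Y] [PolishSpace Y] [BorelSpace Y]
    [MetricSpace Ψ] [MetricSpace Ω]
    (ψX : X → Ψ) (φX : X × X → ℝ) (ωX : X × X → Ω)
    (ψY : Y → Ψ) (φY : Y × Y → ℝ) (ωY : Y × Y → Ω)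
    (μX : Measure X) (μY : Measure Y)
    [IsProbabilityMeasure μX] [IsProbabilityMeasure μY]
    [μX.IsOpenPosMeasure] [μY.IsOpenPosMeasure]
    (hψX : Continuous ψX) (hψXb : Bornology.IsBounded (Set.range ψX))
    (hφX : Continuous φX) (hφXb : Bornology.IsBounded (Set.range φX))
    (hωX : Continuous ωX) (hωXb : Bornology.IsBounded (Set.range ωX))
    (hψY : Continuous ψY) (hψYb : Bornology.IsBounded (Set.range ψY))
    (hφY : Continuous φY) (hφYb : Bornology.IsBounded (Set.range φY))
    (hωY : Continuous ωY) (hωYb : Bornology.IsBounded (Set.range ωY))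
    (p q α β : ℝ) (hp : 1 ≤ p) (hq : 1 ≤ q)
    (hα : α ∈ Set.Icc (0 : ℝ) 1) (hβ : β ∈ Set.Icc (0 : ℝ) 1) :
    LowerSemicontinuousOn
      (fun μ : ProbabilityMeasure (X × Y) =>
        fngwCost α β q p ψX φX ωX ψY φY ωY (μ : Measure (X × Y)))
      {μ : ProbabilityMeasure (X × Y) | (μ : Measure (X × Y)) ∈ couplings μX μY} := by
  classical
  have hq0 : (0:ℝ) < q := lt_of_lt_of_le zero_lt_one hq
  have hp0 : (0:ℝ) < p := lt_of_lt_of_le zero_lt_one hp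
  -- nonemptiness of X and Y
  have hXne : Nonempty X := by
    by_contra hc
    rw [not_nonempty_iff] at hc
    have h1 : μX Set.univ = 1 := measure_univ
    rw [Set.univ_eq_empty_iff.mpr hc] at h1
    simp at h1
  have hYne : Nonempty Y := by
    by_contra hc
    rw [not_nonempty_iff] at hc
    have h1 : μY Set.univ = 1 := measure_univ
    rw [Set.univ_eq_empty_iff.mpr hc] at h1
    simp at h1
  set S := X × Y with hS
  -- the integrand
  set G : (S × S) → ℝ := fun w =>
    ((1 - α - β) * dist (ψX w.1.1) (ψY w.1.2) ^ q
      + α * dist (ωX (w.1.1, w.2.1)) (ωY (w.1.2, w.2.2)) ^ q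
      + β * |φX (w.1.1, w.2.1) - φY (w.1.2, w.2.2)| ^ q) ^ p with hG
  -- continuity of the integrand
  have hrpow_q : Continuous (fun t : ℝ => t ^ q) :=
    continuous_iff_continuousAt.mpr fun t => Real.continuousAt_rpow_const t q (Or.inr hq0.le)
  have hrpow_p : Continuous (fun t : ℝ => t ^ p) :=
    continuous_iff_continuousAt.mpr fun t => Real.continuousAt_rpow_const t p (Or.inr hp0.le)
  have hGcont : Continuous G := by
    apply hrpow_p.comp
    apply Continuous.add
    apply Continuous.add
    · exact continuous_const.mul (hrpow_q.comp
        ((hψX.comp (continuous_fst.comp continuous_fst)).dist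
          (hψY.comp (continuous_snd.comp continuous_fst))))
    · exact continuous_const.mul (hrpow_q.comp
        ((hωX.comp ((continuous_fst.comp continuous_fst).prodMk
            (continuous_fst.comp continuous_snd))).dist
          (hωY.comp ((continuous_snd.comp continuous_fst).prodMk
            (continuous_snd.comp continuous_snd)))))
    · exact continuous_const.mul (hrpow_q.comp (continuous_abs.comp
        ((hφX.comp ((continuous_fst.comp continuous_fst).prodMk
            (continuous_fst.comp continuous_snd))).sub
          (hφY.comp ((continuous_snd.comp continuous_fst).prodMk
            (continuous_snd.comp continuous_snd))))))
  -- boundedness of the integrand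
  obtain ⟨Cψ, hCψ⟩ : ∃ C : ℝ, 0 ≤ C ∧ ∀ (x : X) (y : Y), dist (ψX x) (ψY y) ≤ C := by
    obtain ⟨x₀⟩ := hXne
    obtain ⟨r1, hr1⟩ := (Metric.isBounded_iff_subset_closedBall (ψX x₀)).mp hψXb
    obtain ⟨r2, hr2⟩ := (Metric.isBounded_iff_subset_closedBall (ψX x₀)).mp hψYb
    refine ⟨max (r1 + r2) 0, le_max_right _ _, fun x y => ?_⟩
    have h1 : dist (ψX x) (ψX x₀) ≤ r1 := hr1 (Set.mem_range_self x)
    have h2 : dist (ψY y) (ψX x₀) ≤ r2 := hr2 (Set.mem_range_self y)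
    calc dist (ψX x) (ψY y) ≤ dist (ψX x) (ψX x₀) + dist (ψX x₀) (ψY y) := dist_triangle _ _ _
      _ ≤ r1 + r2 := by rw [dist_comm (ψX x₀)]; exact add_le_add h1 h2
      _ ≤ max (r1 + r2) 0 := le_max_left _ _
  obtain ⟨CΩ, hCΩ⟩ : ∃ C : ℝ, 0 ≤ C ∧
      ∀ (u : X × X) (v : Y × Y), dist (ωX u) (ωY v) ≤ C := by
    obtain ⟨x₀⟩ := hXne
    obtain ⟨r1, hr1⟩ := (Metric.isBounded_iff_subset_closedBall (ωX (x₀, x₀))).mp hωXb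
    obtain ⟨r2, hr2⟩ := (Metric.isBounded_iff_subset_closedBall (ωX (x₀, x₀))).mp hωYb
    refine ⟨max (r1 + r2) 0, le_max_right _ _, fun u v => ?_⟩
    have h1 : dist (ωX u) (ωX (x₀, x₀)) ≤ r1 := hr1 (Set.mem_range_self u)
    have h2 : dist (ωY v) (ωX (x₀, x₀)) ≤ r2 := hr2 (Set.mem_range_self v)
    calc dist (ωX u) (ωY v) ≤ dist (ωX u) (ωX (x₀, x₀)) + dist (ωX (x₀, x₀)) (ωY v) :=
          dist_triangle _ _ _
      _ ≤ r1 + r2 := by rw [dist_comm (ωX (x₀, x₀))]; exact add_le_add h1 h2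
      _ ≤ max (r1 + r2) 0 := le_max_left _ _
  obtain ⟨Cφ, hCφ⟩ : ∃ C : ℝ, 0 ≤ C ∧
      ∀ (u : X × X) (v : Y × Y), |φX u - φY v| ≤ C := by
    obtain ⟨C1, hC1⟩ := isBounded_iff_forall_norm_le.mp hφXb
    obtain ⟨C2, hC2⟩ := isBounded_iff_forall_norm_le.mp hφYb
    refine ⟨max (C1 + C2) 0, le_max_right _ _, fun u v => ?_⟩
    have h1 : |φX u| ≤ C1 := hC1 _ (Set.mem_range_self u)
    have h2 : |φY v| ≤ C2 := hC2 _ (Set.mem_range_self v)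
    calc |φX u - φY v| ≤ |φX u| + |φY v| := abs_sub _ _
      _ ≤ C1 + C2 := add_le_add h1 h2
      _ ≤ max (C1 + C2) 0 := le_max_left _ _
  set M : ℝ := |1 - α - β| * Cψ ^ q + α * CΩ ^ q + β * Cφ ^ q with hM
  have hGbdd : ∀ w : S × S, ‖G w‖ ≤ M ^ p := by
    intro w
    have hinner : |(1 - α - β) * dist (ψX w.1.1) (ψY w.1.2) ^ q
        + α * dist (ωX (w.1.1, w.2.1)) (ωY (w.1.2, w.2.2)) ^ q
        + β * |φX (w.1.1, w.2.1) - φY (w.1.2, w.2.2)| ^ q| ≤ M := by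
      have t1 : dist (ψX w.1.1) (ψY w.1.2) ^ q ≤ Cψ ^ q :=
        Real.rpow_le_rpow dist_nonneg (hCψ.2 _ _) hq0.le
      have t2 : dist (ωX (w.1.1, w.2.1)) (ωY (w.1.2, w.2.2)) ^ q ≤ CΩ ^ q :=
        Real.rpow_le_rpow dist_nonneg (hCΩ.2 _ _) hq0.le
      have t3 : |φX (w.1.1, w.2.1) - φY (w.1.2, w.2.2)| ^ q ≤ Cφ ^ q :=
        Real.rpow_le_rpow (abs_nonneg _) (hCφ.2 _ _) hq0.le
      have n1 : (0:ℝ) ≤ dist (ψX w.1.1) (ψY w.1.2) ^ q := Real.rpow_nonneg dist_nonneg q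
      have n2 : (0:ℝ) ≤ dist (ωX (w.1.1, w.2.1)) (ωY (w.1.2, w.2.2)) ^ q :=
        Real.rpow_nonneg dist_nonneg q
      have n3 : (0:ℝ) ≤ |φX (w.1.1, w.2.1) - φY (w.1.2, w.2.2)| ^ q :=
        Real.rpow_nonneg (abs_nonneg _) q
      calc |(1 - α - β) * dist (ψX w.1.1) (ψY w.1.2) ^ q
          + α * dist (ωX (w.1.1, w.2.1)) (ωY (w.1.2, w.2.2)) ^ q
          + β * |φX (w.1.1, w.2.1) - φY (w.1.2, w.2.2)| ^ q|
          ≤ |(1 - α - β) * dist (ψX w.1.1) (ψY w.1.2) ^ q|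
            + |α * dist (ωX (w.1.1, w.2.1)) (ωY (w.1.2, w.2.2)) ^ q|
            + |β * |φX (w.1.1, w.2.1) - φY (w.1.2, w.2.2)| ^ q| := abs_add_three _ _ _
        _ ≤ M := by
            rw [hM, abs_mul, abs_mul, abs_mul, abs_of_nonneg hα.1, abs_of_nonneg hβ.1,
              abs_of_nonneg n1, abs_of_nonneg n2, abs_of_nonneg n3]
            have c1 : |1 - α - β| * (dist (ψX w.1.1) (ψY w.1.2) ^ q) ≤ |1 - α - β| * Cψ ^ q :=
              mul_le_mul_of_nonneg_left t1 (abs_nonneg _)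
            have c2 : α * (dist (ωX (w.1.1, w.2.1)) (ωY (w.1.2, w.2.2)) ^ q) ≤ α * CΩ ^ q :=
              mul_le_mul_of_nonneg_left t2 hα.1
            have c3 : β * (|φX (w.1.1, w.2.1) - φY (w.1.2, w.2.2)| ^ q) ≤ β * Cφ ^ q :=
              mul_le_mul_of_nonneg_left t3 hβ.1
            linarith
    rw [hG]
    calc ‖((1 - α - β) * dist (ψX w.1.1) (ψY w.1.2) ^ q
          + α * dist (ωX (w.1.1, w.2.1)) (ωY (w.1.2, w.2.2)) ^ q
          + β * |φX (w.1.1, w.2.1) - φY (w.1.2, w.2.2)| ^ q) ^ p‖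
        = |((1 - α - β) * dist (ψX w.1.1) (ψY w.1.2) ^ q
          + α * dist (ωX (w.1.1, w.2.1)) (ωY (w.1.2, w.2.2)) ^ q
          + β * |φX (w.1.1, w.2.1) - φY (w.1.2, w.2.2)| ^ q) ^ p| := Real.norm_eq_abs _
      _ ≤ |(1 - α - β) * dist (ψX w.1.1) (ψY w.1.2) ^ q
          + α * dist (ωX (w.1.1, w.2.1)) (ωY (w.1.2, w.2.2)) ^ q
          + β * |φX (w.1.1, w.2.1) - φY (w.1.2, w.2.2)| ^ q| ^ p :=
          Real.abs_rpow_le_abs_rpow _ _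
      _ ≤ M ^ p := Real.rpow_le_rpow (abs_nonneg _) hinner hp0.le
  set Gb : (S × S) →ᵇ ℝ :=
    BoundedContinuousFunction.ofNormedAddCommGroup G hGcont (M ^ p) hGbdd with hGb
  have hGb_apply : ∀ w, Gb w = G w := fun w => rfl
  -- the cost functional in terms of Gb
  have hcost : ∀ ν : ProbabilityMeasure S,
      fngwCost α β q p ψX φX ωX ψY φY ωY (ν : Measure S)
        = (∫ w, Gb w ∂((ν.prod ν : ProbabilityMeasure (S × S)) : Measure (S × S))) ^ (1 / p) :=
    fun ν => rfl
  -- continuity of the functional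
  have hcontinuous : Continuous (fun ν : ProbabilityMeasure S =>
      fngwCost α β q p ψX φX ωX ψY φY ωY (ν : Measure S)) := by
    apply SeqContinuous.continuous
    intro μs μ0 hconv
    have hprod := FNGWAux.tendsto_prod_self hconv
    have hint := ProbabilityMeasure.tendsto_iff_forall_integral_tendsto.mp hprod Gb
    have : Tendsto (fun n =>
        (∫ w, Gb w ∂(((μs n).prod (μs n) : ProbabilityMeasure (S × S)) : Measure (S × S)))
          ^ (1 / p)) atTop
        (𝓝 ((∫ w, Gb w ∂((μ0.prod μ0 : ProbabilityMeasure (S × S)) : Measure (S × S)))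
          ^ (1 / p))) := by
      apply Filter.Tendsto.rpow_const hint
      right
      positivity
    simp only [Function.comp_def, hcost]
    exact this
  exact hcontinuous.lowerSemicontinuous.lowerSemicontinuousOn _
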